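/- Let T₁ and T₂ be commuting contractions on a complex Hilbert space H, T = T₁T₂, and let A be the positive operator with TⁿT*ⁿ → A in the strong operator topology. Then T₁ A T₁* = A and T₂ A T₂* = A. -/

import Mathlib

set_option maxHeartbeats 1000000


open ContinuousLinearMap Filter

local notation "⟪" x ", " y "⟫" => @inner ℂ _ _ x y

private lemma aux_asymptotic_inv {H : Type*} [NormedAddCommGroup H] [InnerProductSpace ℂ H]
    [CompleteSpace H] (S R A : H →L[ℂ] H)
    (hS : ‖S‖ ≤ 1) (hR : ‖R‖ ≤ 1) (hcomm : S * R = R * S)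
    (hA : ∀ h : H, Tendsto (fun n : ℕ => ((S * R) ^ n * adjoint ((S * R) ^ n)) h)
      atTop (nhds (A h))) :
    S * A * adjoint S = A := by
  have hSR : Commute S R := hcomm
  have cTS : Commute (S * R) S := Commute.mul_left (Commute.refl S) hSR.symm
  have cTR : Commute (S * R) R := Commute.mul_left hSR (Commute.refl R)
  have hTS : Commute (adjoint (S * R)) (adjoint S) := by
    rw [← star_eq_adjoint, ← star_eq_adjoint]; exact cTS.star_star
  have hTR : Commute (adjoint (S * R)) (adjoint R) := by
    rw [← star_eq_adjoint, ← star_eq_adjoint]; exact cTR.star_star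
  have hadj_pow : ∀ n : ℕ, adjoint ((S * R) ^ n) = (adjoint (S * R)) ^ n := by
    intro n; rw [← star_eq_adjoint, ← star_eq_adjoint, star_pow]
  have hnormS : ‖adjoint S‖ ≤ 1 := by rw [← star_eq_adjoint, norm_star]; exact hS
  have hnormR : ‖adjoint R‖ ≤ 1 := by rw [← star_eq_adjoint, norm_star]; exact hR
  have hquad : ∀ (n : ℕ) (x : H),
      ⟪((S * R) ^ n * adjoint ((S * R) ^ n)) x, x⟫
        = ((‖((adjoint (S * R)) ^ n) x‖ : ℂ)) ^ 2 := by
    intro n x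
    calc ⟪((S * R) ^ n * adjoint ((S * R) ^ n)) x, x⟫
        = ⟪(adjoint (adjoint ((S * R) ^ n))) ((adjoint ((S * R) ^ n)) x), x⟫ := by
          rw [adjoint_adjoint, ContinuousLinearMap.mul_apply]
      _ = ⟪(adjoint ((S * R) ^ n)) x, (adjoint ((S * R) ^ n)) x⟫ :=
          adjoint_inner_left _ _ _
      _ = ((‖((adjoint (S * R)) ^ n) x‖ : ℂ)) ^ 2 := by
          rw [inner_self_eq_norm_sq_to_K, hadj_pow]; norm_cast
  have hinner : ∀ x : H, Tendsto (fun n : ℕ => ⟪((S * R) ^ n * adjoint ((S * R) ^ n)) x, x⟫)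
      atTop (nhds ⟪A x, x⟫) := fun x =>
    ((continuous_inner.comp (Continuous.prodMk continuous_id continuous_const)).tendsto _).comp
      (hA x)
  have hlim : ∀ x : H, Tendsto (fun n : ℕ => ‖((adjoint (S * R)) ^ n) x‖ ^ 2) atTop
      (nhds (⟪A x, x⟫.re)) := by
    intro x
    have h2 := (Complex.continuous_re.tendsto _).comp (hinner x)
    simpa only [Function.comp_def, hquad, ← Complex.ofReal_pow, Complex.ofReal_re] using h2
  have hreal : ∀ x : H, ⟪A x, x⟫ = ((⟪A x, x⟫.re : ℝ) : ℂ) := by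
    intro x
    have h2 := (Complex.continuous_im.tendsto _).comp (hinner x)
    have h3 : Tendsto (fun _ : ℕ => (0 : ℝ)) atTop (nhds (⟪A x, x⟫.im)) := by
      simpa only [Function.comp_def, hquad, ← Complex.ofReal_pow, Complex.ofReal_im] using h2
    have him : ⟪A x, x⟫.im = 0 := (tendsto_nhds_unique h3 tendsto_const_nhds :)
    exact (Complex.ext (by simp) (by simp [him])).symm
  have key : ∀ h : H, ⟪(S * A * adjoint S) h, h⟫ = ⟪A h, h⟫ := by
    intro h
    have hv : Tendsto (fun n : ℕ => ‖((adjoint (S * R)) ^ n) (adjoint S h)‖ ^ 2) atTop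
        (nhds (⟪A h, h⟫.re)) := by
      have hlow : Tendsto (fun n : ℕ => ‖((adjoint (S * R)) ^ (n + 1)) h‖ ^ 2) atTop
          (nhds (⟪A h, h⟫.re)) := (hlim h).comp (tendsto_add_atTop_nat 1)
      refine tendsto_of_tendsto_of_tendsto_of_le_of_le hlow (hlim h) ?_ ?_
      · intro n
        dsimp only
        have hcm : ((adjoint (S * R)) ^ (n + 1)) h
            = adjoint R (((adjoint (S * R)) ^ n) (adjoint S h)) := by
          have e2 : adjoint (S * R) = adjoint R * adjoint S := by
            rw [← star_eq_adjoint, ← star_eq_adjoint, ← star_eq_adjoint, star_mul]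
          have e3 : (adjoint (S * R)) ^ n * adjoint R = adjoint R * (adjoint (S * R)) ^ n :=
            (hTR.pow_left n)
          calc ((adjoint (S * R)) ^ (n + 1)) h
              = ((adjoint (S * R)) ^ n * (adjoint R * adjoint S)) h := by
                rw [← e2, ← pow_succ]
            _ = (adjoint R * ((adjoint (S * R)) ^ n * adjoint S)) h := by
                rw [← mul_assoc, e3, mul_assoc]
            _ = adjoint R (((adjoint (S * R)) ^ n) (adjoint S h)) := by
                rw [ContinuousLinearMap.mul_apply, ContinuousLinearMap.mul_apply]
        rw [hcm]
        refine pow_le_pow_left₀ (norm_nonneg _) ?_ 2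
        calc ‖adjoint R (((adjoint (S * R)) ^ n) (adjoint S h))‖
            ≤ ‖adjoint R‖ * ‖((adjoint (S * R)) ^ n) (adjoint S h)‖ := le_opNorm _ _
          _ ≤ 1 * ‖((adjoint (S * R)) ^ n) (adjoint S h)‖ :=
              mul_le_mul_of_nonneg_right hnormR (norm_nonneg _)
          _ = _ := one_mul _
      · intro n
        dsimp only
        have hcm : ((adjoint (S * R)) ^ n) (adjoint S h)
            = adjoint S (((adjoint (S * R)) ^ n) h) := by
          have e3 : (adjoint (S * R)) ^ n * adjoint S = adjoint S * (adjoint (S * R)) ^ n :=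
            (hTS.pow_left n)
          calc ((adjoint (S * R)) ^ n) (adjoint S h)
              = ((adjoint (S * R)) ^ n * adjoint S) h := by rw [ContinuousLinearMap.mul_apply]
            _ = (adjoint S * (adjoint (S * R)) ^ n) h := by rw [e3]
            _ = adjoint S (((adjoint (S * R)) ^ n) h) := by rw [ContinuousLinearMap.mul_apply]
        rw [hcm]
        refine pow_le_pow_left₀ (norm_nonneg _) ?_ 2
        calc ‖adjoint S (((adjoint (S * R)) ^ n) h)‖
            ≤ ‖adjoint S‖ * ‖((adjoint (S * R)) ^ n) h‖ := le_opNorm _ _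
          _ ≤ 1 * ‖((adjoint (S * R)) ^ n) h‖ :=
              mul_le_mul_of_nonneg_right hnormS (norm_nonneg _)
          _ = _ := one_mul _
    have h2 : Tendsto (fun n : ℕ => ⟪((S * R) ^ n * adjoint ((S * R) ^ n)) (adjoint S h),
        adjoint S h⟫) atTop (nhds ((⟪A h, h⟫.re : ℝ) : ℂ)) := by
      have h2' := (Complex.continuous_ofReal.tendsto _).comp hv
      simpa only [Function.comp_def, hquad, ← Complex.ofReal_pow] using h2'
    have h3 : ⟪A (adjoint S h), adjoint S h⟫ = ((⟪A h, h⟫.re : ℝ) : ℂ) :=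
      tendsto_nhds_unique (hinner (adjoint S h)) h2
    calc ⟪(S * A * adjoint S) h, h⟫ = ⟪S (A (adjoint S h)), h⟫ := by
          rw [ContinuousLinearMap.mul_apply, ContinuousLinearMap.mul_apply]
      _ = ⟪A (adjoint S h), adjoint S h⟫ := (adjoint_inner_right S _ _).symm
      _ = ((⟪A h, h⟫.re : ℝ) : ℂ) := h3
      _ = ⟪A h, h⟫ := (hreal h).symm
  have hfin := (ext_inner_map ((S * A * adjoint S : H →L[ℂ] H) : H →ₗ[ℂ] H)
    ((A : H →L[ℂ] H) : H →ₗ[ℂ] H)).mp key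
  exact ContinuousLinearMap.coe_injective hfin

/-- Let `T₁, T₂` be commuting contractions, `T = T₁T₂`, and let `A` be the positive operator
which is the strong limit of `Tⁿ T*ⁿ`.  Then `T₁ A T₁* = A` and `T₂ A T₂* = A`. -/
theorem asymptotic_limit_invariance {H : Type*} [NormedAddCommGroup H] [InnerProductSpace ℂ H]
    [CompleteSpace H] (T₁ T₂ A : H →L[ℂ] H)
    (hT₁ : ‖T₁‖ ≤ 1) (hT₂ : ‖T₂‖ ≤ 1) (hcomm : T₁ * T₂ = T₂ * T₁)
    (hApos : A.IsPositive)
    (hA : ∀ h : H, Tendsto (fun n : ℕ => ((T₁ * T₂) ^ n * adjoint ((T₁ * T₂) ^ n)) h)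
      atTop (nhds (A h))) :
    T₁ * A * adjoint T₁ = A ∧ T₂ * A * adjoint T₂ = A := by
  constructor
  · exact aux_asymptotic_inv T₁ T₂ A hT₁ hT₂ hcomm hA
  · refine aux_asymptotic_inv T₂ T₁ A hT₂ hT₁ hcomm.symm ?_
    rw [← hcomm]
    exact hA
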